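/- arXiv:0909.3520 — 2 statements merged into one kernel-verified Lean document; each statement's English description precedes it below -/
import Mathlib

section
/- A k-peg Hanoi group G generated by S is contracting if and only if S satisfies condition (*). -/
/-!
Common framework: automorphisms of the rooted tree `X_k^*`, root permutations,
sections, self-similar and contracting groups, Hanoi automorphisms and Hanoi
groups, following Makisumi–Stadnyk–Steinhurst, "Modified Hanoi Towers Groups
and Limit Spaces".

A word `x_n … x_1` over the alphabet `X_k = Fin k` is encoded as the list
`[x_n, …, x_1]`, whose head `x_n` is the first letter, i.e. the letter that a
tree automorphism reads (and permutes) first.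
-/

namespace Hanoi

/-- Words over the alphabet `X_k = Fin k`. -/
abbrev Word (k : ℕ) := List (Fin k)

/-- `e` is an automorphism of the rooted tree `X_k^*`: it fixes the root
(the empty word), preserves word length (levels) and preserves the tree
structure (words sharing an initial segment of length `n` are sent to words
sharing an initial segment of length `n`). -/
def IsTreeAut {k : ℕ} (e : Equiv.Perm (Word k)) : Prop :=
  (∀ w : Word k, (e w).length = w.length) ∧
    ∀ (w v : Word k) (n : ℕ), w.take n = v.take n → (e w).take n = (e v).take n

open Classical in
/-- The root permutation `σ_e` of a tree automorphism `e` (its action on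
one-letter words). -/
noncomputable def rootPerm {k : ℕ} (e : Equiv.Perm (Word k)) : Equiv.Perm (Fin k) :=
  if h : Function.Bijective (fun x : Fin k => ((e [x]).head?.getD x)) then
    Equiv.ofBijective _ h
  else 1

open Classical in
/-- The section `e|_x` of `e` at a letter `x`: the unique automorphism with
`e (x :: w) = σ_e x :: (e|_x) w` for all words `w`. -/
noncomputable def sec {k : ℕ} (e : Equiv.Perm (Word k)) (x : Fin k) : Equiv.Perm (Word k) :=
  if h : Function.Bijective (fun w : Word k => (e (x :: w)).tail) then
    Equiv.ofBijective _ h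
  else 1

/-- The section `e|_v` of `e` at a word `v = x_n … x_1`, defined by
`e|_v = (e|_{x_n})|_{x_{n-1} … x_1}`. -/
noncomputable def secW {k : ℕ} (e : Equiv.Perm (Word k)) : Word k → Equiv.Perm (Word k)
  | [] => e
  | x :: v => secW (sec e x) v

/-- A subgroup of the permutations of `X_k^*` is self-similar if it consists of
tree automorphisms and is closed under taking sections. -/
def IsSelfSimilar {k : ℕ} (G : Subgroup (Equiv.Perm (Word k))) : Prop :=
  (∀ g ∈ G, IsTreeAut g) ∧ ∀ g ∈ G, ∀ x : Fin k, sec g x ∈ G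

/-- A self-similar group `G` is contracting if there is a finite subset `N ⊆ G`
such that for every `g ∈ G` all sections of `g` at words of length at least
some `m` lie in `N`. -/
def IsContracting {k : ℕ} (G : Subgroup (Equiv.Perm (Word k))) : Prop :=
  ∃ N : Set (Equiv.Perm (Word k)), N.Finite ∧ N ⊆ (G : Set (Equiv.Perm (Word k))) ∧
    ∀ g ∈ G, ∃ m : ℕ, ∀ v : Word k, m ≤ v.length → secW g v ∈ N

/-- `N` is the nucleus of `G`: a smallest finite subset of `G` catching all
deep enough sections of every element of `G`. -/
def IsNucleus {k : ℕ} (G : Subgroup (Equiv.Perm (Word k)))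
    (N : Set (Equiv.Perm (Word k))) : Prop :=
  (N.Finite ∧ N ⊆ (G : Set (Equiv.Perm (Word k))) ∧
    ∀ g ∈ G, ∃ m : ℕ, ∀ v : Word k, m ≤ v.length → secW g v ∈ N) ∧
  ∀ N' : Set (Equiv.Perm (Word k)), N'.Finite → N' ⊆ (G : Set (Equiv.Perm (Word k))) →
    (∀ g ∈ G, ∃ m : ℕ, ∀ v : Word k, m ≤ v.length → secW g v ∈ N') → N ⊆ N'

/-- `a` is a Hanoi automorphism with set of inactive pegs `Q`: the section at
each active peg (element of the complement of `Q`) is trivial, the section at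
each inactive peg is `a` itself, and the root permutation fixes each inactive
peg. -/
def IsHanoiWith {k : ℕ} (a : Equiv.Perm (Word k)) (Q : Set (Fin k)) : Prop :=
  IsTreeAut a ∧ (∀ i ∉ Q, sec a i = 1) ∧ (∀ j ∈ Q, sec a j = a) ∧
    ∀ j ∈ Q, rootPerm a j = j

/-- `a` is a `k`-peg Hanoi automorphism. -/
def IsHanoiAut {k : ℕ} (a : Equiv.Perm (Word k)) : Prop := ∃ Q, IsHanoiWith a Q

open Classical in
/-- The set `Q_a` of inactive pegs of a Hanoi automorphism `a`; by convention
`Q_1 = X_k` (for `a ≠ 1` the set of inactive pegs is uniquely determined). -/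
noncomputable def inactivePegs {k : ℕ} (a : Equiv.Perm (Word k)) : Set (Fin k) :=
  if a = 1 then Set.univ
  else if h : ∃ Q, IsHanoiWith a Q then h.choose else ∅

/-- `S_{k,q}`: the set of Hanoi automorphisms over `X_k` with exactly `q`
inactive pegs. -/
noncomputable def hanoiSet (k q : ℕ) : Set (Equiv.Perm (Word k)) :=
  {a | IsHanoiAut a ∧ (inactivePegs a).ncard = q}

/-- `L = [s_n, …, s_1]` is a representation of `g` over the generating set `S`:
each `s_i ∈ S ∪ S⁻¹` and `g = s_n ⋯ s_2 s_1`. -/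
def IsRepOf {k : ℕ} (S : Set (Equiv.Perm (Word k))) (L : List (Equiv.Perm (Word k)))
    (g : Equiv.Perm (Word k)) : Prop :=
  (∀ s ∈ L, s ∈ S ∨ s⁻¹ ∈ S) ∧ L.prod = g

/-- The length `l(g)` of `g` with respect to `S`: the length of a minimal
representation (`0` for the identity). -/
noncomputable def repLength {k : ℕ} (S : Set (Equiv.Perm (Word k)))
    (g : Equiv.Perm (Word k)) : ℕ :=
  sInf {n | ∃ L, IsRepOf S L g ∧ L.length = n}

/-- The essential set of a representation: the intersection of the sets of
inactive pegs of its letters. -/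
noncomputable def essSet {k : ℕ} (L : List (Equiv.Perm (Word k))) : Set (Fin k) :=
  ⋂ s ∈ L, inactivePegs s

/-- The prenucleus of `G`: the set of elements `g ∈ G` with `g|_j = g` for some
letter `j`. -/
noncomputable def preNucleus {k : ℕ} (G : Subgroup (Equiv.Perm (Word k))) :
    Set (Equiv.Perm (Word k)) :=
  {g | g ∈ G ∧ ∃ j : Fin k, sec g j = g}

/-- The underlying function of the Hanoi Towers move `a_{ij}`: it changes the
first occurrence of `i` or `j` in a word by means of the transposition `(i j)`
and leaves the rest of the word unchanged. -/
def hanoiMoveFun {k : ℕ} (i j : Fin k) : Word k → Word k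
  | [] => []
  | x :: w => if x = i ∨ x = j then Equiv.swap i j x :: w else x :: hanoiMoveFun i j w

theorem hanoiMoveFun_involutive {k : ℕ} (i j : Fin k) :
    Function.Involutive (hanoiMoveFun i j) := by
  intro w
  induction w with
  | nil => rfl
  | cons x t ih =>
    by_cases h : x = i ∨ x = j
    · have h2 : Equiv.swap i j x = i ∨ Equiv.swap i j x = j := by
        rcases h with h | h <;> subst h <;> simp
      simp only [hanoiMoveFun, if_pos h, if_pos h2, Equiv.swap_apply_self]
    · simp only [hanoiMoveFun, if_neg h, ih]

/-- The Hanoi Towers move `a_{ij}`, as a permutation of `X_k^*`: its root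
permutation is the transposition `(i j)`, its sections at `i` and `j` are
trivial and all its other sections equal `a_{ij}` itself. -/
def hanoiMove {k : ℕ} (i j : Fin k) : Equiv.Perm (Word k) :=
  (hanoiMoveFun_involutive i j).toPerm

/-- The orbit of the letter `j` under the subgroup of `Sym(X_k)` generated by
the root permutations of the elements of `T`. -/
noncomputable def orbT {k : ℕ} (T : Finset (Equiv.Perm (Word k))) (j : Fin k) : Set (Fin k) :=
  MulAction.orbit (Subgroup.closure ((fun a => rootPerm a) '' (T : Set (Equiv.Perm (Word k))))) j

/-- The set `Fix(T)` of letters fixed by the root permutation of every element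
of `T`. -/
noncomputable def fixT {k : ℕ} (T : Finset (Equiv.Perm (Word k))) : Set (Fin k) :=
  {x | ∀ s ∈ T, rootPerm s x = x}

/-- Condition (*) on a generating set `S` of Hanoi automorphisms: for every
finite `T ⊆ S` with nonempty essential set and every letter `j ∉ Fix(T)`,
the orbit of `j` misses the inactive pegs of some element of `T`. -/
noncomputable def CondStar {k : ℕ} (S : Set (Equiv.Perm (Word k))) : Prop :=
  ∀ T : Finset (Equiv.Perm (Word k)), (T : Set (Equiv.Perm (Word k))) ⊆ S →
    (⋂ s ∈ T, inactivePegs s).Nonempty →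
    ∀ j : Fin k, j ∉ fixT T →
      ∃ s ∈ T, orbT T j ∩ inactivePegs s = ∅

open Classical in
/-- `d(g)`: the least number of distinct generators occurring among all
representations of `g` having nonempty essential set. -/
noncomputable def dCount {k : ℕ} (S : Set (Equiv.Perm (Word k)))
    (g : Equiv.Perm (Word k)) : ℕ :=
  sInf {M | ∃ L, IsRepOf S L g ∧ (essSet L).Nonempty ∧ L.toFinset.card = M}

/-- `S` is fully symmetric: for every non-identity `a ∈ S` and every
`φ ∈ Sym(X_k)`, the Hanoi automorphism `φ·a` with inactive pegs `φ(Q_a)` and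
root permutation `φ ∘ σ_a ∘ φ⁻¹` again lies in `S`. -/
noncomputable def FullySymmetric {k : ℕ} (S : Set (Equiv.Perm (Word k))) : Prop :=
  ∀ a ∈ S, a ≠ 1 → ∀ φ : Equiv.Perm (Fin k), ∀ b : Equiv.Perm (Word k),
    IsHanoiWith b (φ '' inactivePegs a) →
    rootPerm b = φ * rootPerm a * φ⁻¹ → b ∈ S

/-- The family `R̲_{k,n}`: the identity together with all Hanoi automorphisms
`a` such that (1) `Q_a ⊆ {m+1, …, m+n}` for some `m`, and (2) whenever
`i ∈ Q_a` the root permutation of `a` fixes `i-1, …, i-(n-1)`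
(all peg labels mod `k`). -/
noncomputable def Runder (k n : ℕ) : Set (Equiv.Perm (Word k)) :=
  {a | a = 1 ∨ (IsHanoiAut a ∧
    (∃ m : Fin k, ∀ q ∈ inactivePegs a, ∃ t : ℕ, 1 ≤ t ∧ t ≤ n ∧
      (q : ℕ) = ((m : ℕ) + t) % k) ∧
    ∀ i ∈ inactivePegs a, ∀ x : Fin k, ∀ t : ℕ, 1 ≤ t → t ≤ n - 1 →
      ((x : ℕ) + t) % k = (i : ℕ) → rootPerm a x = x)}

/-- The family `R̄_{k,n}`: the identity together with all Hanoi automorphisms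
`a` such that (1) `Q_a ⊆ {m+1, …, m+n}` for some `m`, and (2) whenever
`i ∈ Q_a` the root permutation of `a` fixes `i+1, …, i+(n-1)`
(all peg labels mod `k`). -/
noncomputable def Rover (k n : ℕ) : Set (Equiv.Perm (Word k)) :=
  {a | a = 1 ∨ (IsHanoiAut a ∧
    (∃ m : Fin k, ∀ q ∈ inactivePegs a, ∃ t : ℕ, 1 ≤ t ∧ t ≤ n ∧
      (q : ℕ) = ((m : ℕ) + t) % k) ∧
    ∀ i ∈ inactivePegs a, ∀ x : Fin k, ∀ t : ℕ, 1 ≤ t → t ≤ n - 1 →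
      (x : ℕ) = ((i : ℕ) + t) % k → rootPerm a x = x)}

/-- The finite word `x_m … x_1` (first letter `x_m`) read off from a
left-infinite sequence `… x_2 x_1`, encoded as `x : ℕ → Fin k` with
`x s = x_{s+1}`. -/
def wordOf {k : ℕ} (x : ℕ → Fin k) (m : ℕ) : Word k := (List.range m).reverse.map x

variable {k : ℕ}

theorem _root_.Equiv.Perm.apply_inv_self {α : Type*} (f : Equiv.Perm α) (x : α) :
    f (f⁻¹ x) = x :=
  Equiv.apply_symm_apply f x

lemma isTreeAut_one : IsTreeAut (1 : Equiv.Perm (Word k)) :=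
  ⟨fun _ => rfl, fun _ _ _ h => h⟩

lemma isTreeAut_of {e : Equiv.Perm (Word k)} (hlen : ∀ w, (e w).length = w.length)
    (htake : ∀ (w : Word k) (n : ℕ), e (w.take n) = (e w).take n) : IsTreeAut e :=
  ⟨hlen, fun w v n h => by rw [← htake, ← htake, h]⟩

lemma IsTreeAut.take_comm {e : Equiv.Perm (Word k)} (he : IsTreeAut e) (w : Word k) (n : ℕ) :
    e (w.take n) = (e w).take n := by
  have h := he.2 (w.take n) w n (by simp [List.take_take])
  have h2 : (e (w.take n)).take n = e (w.take n) :=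
    List.take_of_length_le (by rw [he.1]; simp)
  rw [← h2]
  exact h

lemma IsTreeAut.nil {e : Equiv.Perm (Word k)} (he : IsTreeAut e) : e [] = [] :=
  List.length_eq_zero_iff.mp (he.1 [])

lemma IsTreeAut.mul {g h : Equiv.Perm (Word k)} (hg : IsTreeAut g) (hh : IsTreeAut h) :
    IsTreeAut (g * h) := by
  refine isTreeAut_of (fun w => ?_) (fun w n => ?_)
  · simp only [Equiv.Perm.mul_apply, hg.1, hh.1]
  · simp only [Equiv.Perm.mul_apply, hh.take_comm, hg.take_comm]

lemma IsTreeAut.inv {g : Equiv.Perm (Word k)} (hg : IsTreeAut g) : IsTreeAut g⁻¹ := by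
  refine isTreeAut_of (fun w => ?_) (fun w n => ?_)
  · have h := hg.1 (g⁻¹ w)
    rw [Equiv.Perm.apply_inv_self] at h
    exact h.symm
  · apply g.injective
    rw [Equiv.Perm.apply_inv_self, hg.take_comm, Equiv.Perm.apply_inv_self]

lemma isTreeAut_listProd {L : List (Equiv.Perm (Word k))} (h : ∀ τ ∈ L, IsTreeAut τ) :
    IsTreeAut L.prod := by
  induction L with
  | nil => simpa using isTreeAut_one
  | cons a t ih =>
    rw [List.prod_cons]
    exact (h a (by simp)).mul (ih fun τ hτ => h τ (by simp [hτ]))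

lemma isTreeAut_of_mem_closure {S₀ : Set (Equiv.Perm (Word k))} (hS₀ : ∀ a ∈ S₀, IsTreeAut a)
    {g : Equiv.Perm (Word k)} (hg : g ∈ Subgroup.closure S₀) : IsTreeAut g := by
  refine Subgroup.closure_induction (fun x hx => hS₀ x hx) isTreeAut_one
    (fun x y _ _ hx hy => hx.mul hy) (fun x _ hx => hx.inv) hg

lemma rootPerm_bij {e : Equiv.Perm (Word k)} (he : IsTreeAut e) :
    Function.Bijective (fun x : Fin k => ((e [x]).head?.getD x)) := by
  rw [← Finite.injective_iff_bijective]
  intro x y hxy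
  obtain ⟨a, ha⟩ := List.length_eq_one_iff.mp (he.1 [x])
  obtain ⟨b, hb⟩ := List.length_eq_one_iff.mp (he.1 [y])
  simp only [ha, hb, List.head?_cons, Option.getD_some] at hxy
  have : e [x] = e [y] := by rw [ha, hb, hxy]
  have := e.injective this
  simpa using this

lemma rootPerm_single {e : Equiv.Perm (Word k)} (he : IsTreeAut e) (x : Fin k) :
    e [x] = [rootPerm e x] := by
  obtain ⟨a, ha⟩ := List.length_eq_one_iff.mp (he.1 [x])
  rw [rootPerm, dif_pos (rootPerm_bij he)]
  show e [x] = [(e [x]).head?.getD x]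
  rw [ha]
  simp

lemma head_cons {e : Equiv.Perm (Word k)} (he : IsTreeAut e) (x : Fin k) (w : Word k) :
    ∃ t, e (x :: w) = rootPerm e x :: t := by
  have h1 : (e (x :: w)).take 1 = [rootPerm e x] := by
    have h := he.take_comm (x :: w) 1
    simp only [List.take_succ_cons, List.take_zero] at h
    rw [← h, rootPerm_single he]
  cases hE : e (x :: w) with
  | nil => rw [hE] at h1; simp at h1
  | cons a t =>
    rw [hE] at h1
    simp only [List.take_succ_cons, List.take_zero] at h1
    have ha : a = rootPerm e x := by
      have := congrArg (fun l => List.head? l) h1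
      simpa using this
    exact ⟨t, by rw [ha]⟩

lemma sec_bij {e : Equiv.Perm (Word k)} (he : IsTreeAut e) (x : Fin k) :
    Function.Bijective (fun w : Word k => (e (x :: w)).tail) := by
  constructor
  · intro w w' hww
    obtain ⟨t, ht⟩ := head_cons he x w
    obtain ⟨t', ht'⟩ := head_cons he x w'
    simp only [ht, ht', List.tail_cons] at hww
    have : e (x :: w) = e (x :: w') := by rw [ht, ht', hww]
    have := e.injective this
    simpa using this
  · intro u
    have hv : e (e.symm (rootPerm e x :: u)) = rootPerm e x :: u := Equiv.apply_symm_apply _ _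
    rcases hE : e.symm (rootPerm e x :: u) with _ | ⟨z, w⟩
    · rw [hE, he.nil] at hv
      simp at hv
    · rw [hE] at hv
      obtain ⟨t, ht⟩ := head_cons he z w
      rw [ht] at hv
      have h1 : rootPerm e z = rootPerm e x := by
        have := congrArg List.head? hv; simpa using this
      have h2 : t = u := by
        have := congrArg List.tail hv; simpa using this
      have hz : z = x := (rootPerm e).injective h1
      refine ⟨w, ?_⟩
      show (e (x :: w)).tail = u
      rw [← hz, ht, h2]
      rfl

lemma sec_apply {e : Equiv.Perm (Word k)} (he : IsTreeAut e) (x : Fin k) (w : Word k) :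
    sec e x w = (e (x :: w)).tail := by
  rw [sec, dif_pos (sec_bij he x)]
  rfl

lemma tree_cons {e : Equiv.Perm (Word k)} (he : IsTreeAut e) (x : Fin k) (w : Word k) :
    e (x :: w) = rootPerm e x :: sec e x w := by
  obtain ⟨t, ht⟩ := head_cons he x w
  rw [sec_apply he, ht]
  simp

lemma sec_eq_of {e : Equiv.Perm (Word k)} (he : IsTreeAut e) {x : Fin k} {y : Fin k}
    {f : Equiv.Perm (Word k)} (hf : ∀ w, e (x :: w) = y :: f w) :
    rootPerm e x = y ∧ sec e x = f := by
  have h1 : rootPerm e x = y := by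
    have := (tree_cons he x []).symm.trans (hf [])
    exact (List.cons.injEq _ _ _ _).mp this |>.1
  refine ⟨h1, Equiv.ext fun w => ?_⟩
  have := (tree_cons he x w).symm.trans (hf w)
  exact (List.cons.injEq _ _ _ _).mp this |>.2

lemma rootPerm_one : rootPerm (1 : Equiv.Perm (Word k)) = 1 := by
  refine Equiv.ext fun x => ?_
  have := (sec_eq_of (k := k) isTreeAut_one (x := x) (y := x) (f := 1) (fun w => rfl)).1
  simpa using this

lemma sec_one (x : Fin k) : sec (1 : Equiv.Perm (Word k)) x = 1 :=
  (sec_eq_of (k := k) isTreeAut_one (x := x) (y := x) (f := 1) (fun w => rfl)).2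

lemma sec_mul {g h : Equiv.Perm (Word k)} (hg : IsTreeAut g) (hh : IsTreeAut h) (x : Fin k) :
    rootPerm (g * h) x = rootPerm g (rootPerm h x) ∧
      sec (g * h) x = sec g (rootPerm h x) * sec h x :=
  sec_eq_of (hg.mul hh) (fun w => by
    rw [Equiv.Perm.mul_apply, tree_cons hh, tree_cons hg, Equiv.Perm.mul_apply])

lemma rootPerm_mul {g h : Equiv.Perm (Word k)} (hg : IsTreeAut g) (hh : IsTreeAut h) :
    rootPerm (g * h) = rootPerm g * rootPerm h :=
  Equiv.ext fun x => (sec_mul hg hh x).1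

lemma rootPerm_inv {g : Equiv.Perm (Word k)} (hg : IsTreeAut g) :
    rootPerm g⁻¹ = (rootPerm g)⁻¹ := by
  have h : rootPerm g * rootPerm g⁻¹ = 1 := by
    rw [← rootPerm_mul hg hg.inv, mul_inv_cancel, rootPerm_one]
  exact (inv_eq_of_mul_eq_one_right h).symm

lemma sec_inv {g : Equiv.Perm (Word k)} (hg : IsTreeAut g) (x : Fin k) :
    sec g⁻¹ x = (sec g (rootPerm g⁻¹ x))⁻¹ := by
  have h := (sec_mul hg hg.inv x).2
  rw [mul_inv_cancel, sec_one] at h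
  exact (inv_eq_of_mul_eq_one_right h.symm).symm

lemma exists_word {S₀ : Set (Equiv.Perm (Word k))} {g : Equiv.Perm (Word k)}
    (hg : g ∈ Subgroup.closure S₀) :
    ∃ L : List (Equiv.Perm (Word k)), (∀ τ ∈ L, τ ∈ S₀ ∨ τ⁻¹ ∈ S₀) ∧ L.prod = g := by
  refine Subgroup.closure_induction ?_ ?_ ?_ ?_ hg
  · intro x hx
    exact ⟨[x], by intro τ hτ; simp only [List.mem_singleton] at hτ; subst hτ; exact Or.inl hx,
      by simp⟩
  · exact ⟨[], by intro τ hτ; simp at hτ, by simp⟩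
  · rintro x y _ _ ⟨Lx, hLx, hpx⟩ ⟨Ly, hLy, hpy⟩
    refine ⟨Lx ++ Ly, ?_, by simp [hpx, hpy]⟩
    intro τ hτ
    rcases List.mem_append.mp hτ with h | h
    exacts [hLx τ h, hLy τ h]
  · rintro x _ ⟨L, hL, hp⟩
    refine ⟨(L.map (fun a => a⁻¹)).reverse, ?_, ?_⟩
    · intro τ hτ
      simp only [List.mem_reverse, List.mem_map] at hτ
      obtain ⟨a, ha, rfl⟩ := hτ
      rcases hL a ha with h | h
      · right; simpa using h
      · left; exact h
    · rw [List.prod_reverse_noncomm, List.map_map]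
      have hid : ((fun a : Equiv.Perm (Word k) => a⁻¹) ∘ fun a => a⁻¹) = id := by
        funext a; simp
      rw [hid, List.map_id, hp]


/-! ### Hanoi automorphisms -/

lemma isHanoiWith_one : IsHanoiWith (1 : Equiv.Perm (Word k)) Set.univ :=
  ⟨isTreeAut_one, fun i hi => absurd (Set.mem_univ i) hi, fun j _ => sec_one j,
    fun j _ => by rw [rootPerm_one]; rfl⟩

lemma hanoiWith_unique {a : Equiv.Perm (Word k)} {Q Q' : Set (Fin k)} (ha : a ≠ 1)
    (h : IsHanoiWith a Q) (h' : IsHanoiWith a Q') : Q = Q' := by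
  ext x
  constructor <;> intro hx
  · by_contra hx'
    exact ha ((h.2.2.1 x hx).symm.trans (h'.2.1 x hx'))
  · by_contra hx'
    exact ha ((h'.2.2.1 x hx).symm.trans (h.2.1 x hx'))

lemma inactivePegs_one : inactivePegs (1 : Equiv.Perm (Word k)) = Set.univ := by
  rw [inactivePegs, if_pos rfl]

lemma inactivePegs_spec {a : Equiv.Perm (Word k)} (h : IsHanoiAut a) :
    IsHanoiWith a (inactivePegs a) := by
  rw [inactivePegs]
  split_ifs with h1 h2
  · subst h1; exact isHanoiWith_one
  · exact h2.choose_spec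
  · exact absurd h h2

lemma hanoiWith_inv {a : Equiv.Perm (Word k)} {Q : Set (Fin k)} (h : IsHanoiWith a Q) :
    IsHanoiWith a⁻¹ Q := by
  have ht := h.1
  have hfix : ∀ j ∈ Q, rootPerm a⁻¹ j = j := by
    intro j hj
    rw [rootPerm_inv ht]
    apply (rootPerm a).injective
    rw [Equiv.Perm.apply_inv_self, h.2.2.2 j hj]
  refine ⟨ht.inv, ?_, ?_, hfix⟩
  · intro i hi
    have hri : rootPerm a⁻¹ i ∉ Q := by
      intro hmem
      have h2 := hfix _ hmem
      -- rootPerm a⁻¹ (rootPerm a⁻¹ i) = rootPerm a⁻¹ i : no; h2 : rootPerm a⁻¹ (rootPerm a⁻¹ i)...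
      -- hfix applied to (rootPerm a⁻¹ i): rootPerm a⁻¹ (rootPerm a⁻¹ i) = rootPerm a⁻¹ i
      have h3 : rootPerm a⁻¹ i = i := (rootPerm a⁻¹).injective h2
      exact hi (h3 ▸ hmem)
    rw [sec_inv ht, h.2.1 _ hri, inv_one]
  · intro j hj
    rw [sec_inv ht, hfix j hj, h.2.2.1 j hj]

lemma isHanoiAut_inv {a : Equiv.Perm (Word k)} (h : IsHanoiAut a) : IsHanoiAut a⁻¹ :=
  ⟨_, hanoiWith_inv (inactivePegs_spec h)⟩

lemma inactivePegs_inv {a : Equiv.Perm (Word k)} (h : IsHanoiAut a) :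
    inactivePegs a⁻¹ = inactivePegs a := by
  by_cases ha : a = 1
  · subst ha; rw [inv_one]
  · have hinv : IsHanoiWith a⁻¹ (inactivePegs a) := hanoiWith_inv (inactivePegs_spec h)
    have ha' : a⁻¹ ≠ 1 := fun hh => ha (by rwa [inv_eq_one] at hh)
    exact hanoiWith_unique ha' (inactivePegs_spec ⟨_, hinv⟩) hinv

lemma hanoiWith_det {a b : Equiv.Perm (Word k)} {Q : Set (Fin k)}
    (ha : IsHanoiWith a Q) (hb : IsHanoiWith b Q) (hr : rootPerm a = rootPerm b) : a = b := by
  refine Equiv.ext fun v => ?_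
  induction v with
  | nil => rw [ha.1.nil, hb.1.nil]
  | cons x w ih =>
    rw [tree_cons ha.1, tree_cons hb.1, hr]
    by_cases hx : x ∈ Q
    · rw [ha.2.2.1 x hx, hb.2.2.1 x hx, ih]
    · rw [ha.2.1 x hx, hb.2.1 x hx]

lemma hanoiWith_univ_eq_one {a : Equiv.Perm (Word k)} (h : IsHanoiWith a Set.univ) : a = 1 :=
  hanoiWith_det h isHanoiWith_one (by
    refine Equiv.ext fun x => ?_
    rw [h.2.2.2 x (Set.mem_univ x), rootPerm_one]; rfl)

lemma hanoiAut_finite : {a : Equiv.Perm (Word k) | IsHanoiAut a}.Finite := by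
  have hims : ((Set.univ : Set (Equiv.Perm (Fin k) × Set (Fin k)))).Finite := Set.finite_univ
  refine Set.Finite.of_finite_image (f := fun a => (rootPerm a, inactivePegs a))
    (hims.subset (Set.subset_univ _)) ?_
  intro a ha b hb hab
  simp only [Prod.mk.injEq] at hab
  by_cases h1 : a = 1
  · subst h1
    by_cases h2 : b = 1
    · exact h2.symm
    · exfalso
      have : inactivePegs b = Set.univ := by rw [← hab.2, inactivePegs_one]
      exact h2 (hanoiWith_univ_eq_one (this ▸ inactivePegs_spec hb))
  · by_cases h2 : b = 1
    · exfalso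
      subst h2
      have : inactivePegs a = Set.univ := by rw [hab.2, inactivePegs_one]
      exact h1 (hanoiWith_univ_eq_one (this ▸ inactivePegs_spec ha))
    · exact hanoiWith_det (inactivePegs_spec ha) (hab.2 ▸ inactivePegs_spec hb) hab.1


/-! ### Collection calculus -/

open Classical in
noncomputable def collect : List (Equiv.Perm (Word k)) → Fin k → List (Equiv.Perm (Word k))
  | [], _ => []
  | a :: t, x =>
    (if rootPerm t.prod x ∈ inactivePegs a then [a] else []) ++ collect t x

lemma collect_sublist (L : List (Equiv.Perm (Word k))) (x : Fin k) :
    (collect L x).Sublist L := by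
  induction L with
  | nil => simp [collect]
  | cons a t ih =>
    rw [collect]
    split_ifs with h
    · simpa using List.Sublist.cons₂ a ih
    · simpa using List.Sublist.cons a ih

lemma sec_prod {L : List (Equiv.Perm (Word k))} (hL : ∀ τ ∈ L, IsHanoiAut τ) (x : Fin k) :
    sec L.prod x = (collect L x).prod := by
  induction L with
  | nil => simp [collect, sec_one]
  | cons a t ih =>
    have ha := inactivePegs_spec (hL a (by simp))
    have htt : ∀ τ ∈ t, IsHanoiAut τ := fun τ hτ => hL τ (by simp [hτ])
    have htp : IsTreeAut t.prod :=
      isTreeAut_listProd (fun τ hτ => (inactivePegs_spec (htt τ hτ)).1)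
    rw [List.prod_cons, (sec_mul ha.1 htp x).2, ih htt, collect]
    split_ifs with h
    · rw [ha.2.2.1 _ h, List.prod_append, List.prod_singleton]
    · rw [ha.2.1 _ h, List.prod_append, List.prod_nil, one_mul]

lemma rootPerm_prod_fix {L : List (Equiv.Perm (Word k))} (hL : ∀ τ ∈ L, IsHanoiAut τ)
    {x : Fin k} (hfix : ∀ τ ∈ L, rootPerm τ x = x) : rootPerm L.prod x = x := by
  induction L with
  | nil => rw [List.prod_nil, rootPerm_one]; rfl
  | cons a t ih =>
    have ha := inactivePegs_spec (hL a (by simp))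
    have htp : IsTreeAut t.prod :=
      isTreeAut_listProd (fun τ hτ => (inactivePegs_spec (hL τ (by simp [hτ]))).1)
    rw [List.prod_cons, (sec_mul ha.1 htp x).1,
      ih (fun τ hτ => hL τ (by simp [hτ])) (fun τ hτ => hfix τ (by simp [hτ])),
      hfix a (by simp)]

lemma collect_all {L : List (Equiv.Perm (Word k))} (hL : ∀ τ ∈ L, IsHanoiAut τ)
    {x : Fin k} (hx : ∀ τ ∈ L, x ∈ inactivePegs τ) : collect L x = L := by
  induction L with
  | nil => rfl
  | cons a t ih =>
    have htt : ∀ τ ∈ t, IsHanoiAut τ := fun τ hτ => hL τ (by simp [hτ])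
    have hpos : rootPerm t.prod x = x :=
      rootPerm_prod_fix htt
        (fun τ hτ => (inactivePegs_spec (htt τ hτ)).2.2.2 x (hx τ (by simp [hτ])))
    rw [collect, hpos, if_pos (hx a (by simp)), ih htt (fun τ hτ => hx τ (by simp [hτ]))]
    rfl

lemma collect_full_of_length {L : List (Equiv.Perm (Word k))} (hL : ∀ τ ∈ L, IsHanoiAut τ)
    {x : Fin k} (hlen : (collect L x).length = L.length) : ∀ τ ∈ L, x ∈ inactivePegs τ := by
  induction L with
  | nil => intro τ hτ; simp at hτ
  | cons a t ih =>
    have htt : ∀ τ ∈ t, IsHanoiAut τ := fun τ hτ => hL τ (by simp [hτ])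
    have hsub := (collect_sublist t x).length_le
    rw [collect, List.length_append, List.length_cons] at hlen
    split_ifs at hlen with hc
    · simp only [List.length_singleton] at hlen
      have htlen : (collect t x).length = t.length := by omega
      have hall := ih htt htlen
      have hpos : rootPerm t.prod x = x :=
        rootPerm_prod_fix htt
          (fun τ hτ => (inactivePegs_spec (htt τ hτ)).2.2.2 x (hall τ hτ))
      rw [hpos] at hc
      intro τ hτ
      rcases List.mem_cons.mp hτ with rfl | hmem
      · exact hc
      · exact hall τ hmem
    · simp only [List.length_nil] at hlen
      omega

lemma collect_fix_mem {L : List (Equiv.Perm (Word k))} (hL : ∀ τ ∈ L, IsHanoiAut τ)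
    {x : Fin k} (hfix : ∀ τ ∈ L, rootPerm τ x = x) :
    ∀ b ∈ collect L x, x ∈ inactivePegs b := by
  induction L with
  | nil => intro b hb; simp [collect] at hb
  | cons a t ih =>
    have htt : ∀ τ ∈ t, IsHanoiAut τ := fun τ hτ => hL τ (by simp [hτ])
    have hpos : rootPerm t.prod x = x :=
      rootPerm_prod_fix htt (fun τ hτ => hfix τ (by simp [hτ]))
    intro b hb
    rw [collect, hpos] at hb
    rcases List.mem_append.mp hb with h | h
    · split_ifs at h with hc
      · simp only [List.mem_singleton] at h
        subst h; exact hc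
      · simp at h
    · exact ih htt (fun τ hτ => hfix τ (by simp [hτ])) b h

lemma rootPerm_prod_mem {U : Set (Equiv.Perm (Word k))} (hU : ∀ a ∈ U, IsHanoiAut a)
    {L : List (Equiv.Perm (Word k))} (hL : ∀ τ ∈ L, τ ∈ U ∨ τ⁻¹ ∈ U) :
    rootPerm L.prod ∈ Subgroup.closure ((fun a => rootPerm a) '' U) := by
  induction L with
  | nil => rw [List.prod_nil, rootPerm_one]; exact Subgroup.one_mem _
  | cons a t ih =>
    have haH : IsHanoiAut a := by
      rcases hL a (by simp) with h | h
      · exact hU a h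
      · have := isHanoiAut_inv (hU _ h)
        rwa [inv_inv] at this
    have htt : ∀ τ ∈ t, τ ∈ U ∨ τ⁻¹ ∈ U := fun τ hτ => hL τ (by simp [hτ])
    have httH : ∀ τ ∈ t, IsHanoiAut τ := by
      intro τ hτ
      rcases htt τ hτ with h | h
      · exact hU τ h
      · have := isHanoiAut_inv (hU _ h); rwa [inv_inv] at this
    have htp : IsTreeAut t.prod :=
      isTreeAut_listProd (fun τ hτ => (inactivePegs_spec (httH τ hτ)).1)
    rw [List.prod_cons, rootPerm_mul (inactivePegs_spec haH).1 htp]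
    refine Subgroup.mul_mem _ ?_ (ih htt)
    rcases hL a (by simp) with h | h
    · exact Subgroup.subset_closure ⟨a, h, rfl⟩
    · have hmem : rootPerm a⁻¹ ∈ Subgroup.closure ((fun a => rootPerm a) '' U) :=
        Subgroup.subset_closure ⟨a⁻¹, h, rfl⟩
      have : rootPerm a = (rootPerm a⁻¹)⁻¹ := by
        rw [rootPerm_inv (inactivePegs_spec haH).1, inv_inv]
      rw [this]
      exact Subgroup.inv_mem _ hmem

lemma collect_orbit_mem {U : Set (Equiv.Perm (Word k))} (hU : ∀ a ∈ U, IsHanoiAut a)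
    {L : List (Equiv.Perm (Word k))} (hL : ∀ τ ∈ L, τ ∈ U ∨ τ⁻¹ ∈ U) (x : Fin k) :
    ∀ b ∈ collect L x, ∃ p,
      p ∈ MulAction.orbit (Subgroup.closure ((fun a => rootPerm a) '' U)) x ∧
        p ∈ inactivePegs b := by
  induction L with
  | nil => intro b hb; simp [collect] at hb
  | cons a t ih =>
    have htt : ∀ τ ∈ t, τ ∈ U ∨ τ⁻¹ ∈ U := fun τ hτ => hL τ (by simp [hτ])
    intro b hb
    rw [collect] at hb
    rcases List.mem_append.mp hb with h | h
    · split_ifs at h with hc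
      · simp only [List.mem_singleton] at h
        subst h
        refine ⟨rootPerm t.prod x, ?_, hc⟩
        exact ⟨⟨rootPerm t.prod, rootPerm_prod_mem hU htt⟩, rfl⟩
      · simp at h
    · exact ih htt b h


/-! ### words over a finite support -/

def WU {k : ℕ} (U : Finset (Equiv.Perm (Word k))) : Set (Equiv.Perm (Word k)) :=
  {g | ∃ L : List (Equiv.Perm (Word k)),
    (∀ τ ∈ L, τ ∈ (U : Set (Equiv.Perm (Word k))) ∨ τ⁻¹ ∈ (U : Set (Equiv.Perm (Word k)))) ∧
      L.prod = g}

variable {S : Set (Equiv.Perm (Word k))}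

lemma letter_hanoi (hS : ∀ a ∈ S, IsHanoiAut a) {τ : Equiv.Perm (Word k)}
    (h : τ ∈ S ∨ τ⁻¹ ∈ S) : IsHanoiAut τ := by
  rcases h with h | h
  · exact hS τ h
  · have := isHanoiAut_inv (hS _ h); rwa [inv_inv] at this

lemma letter_pegs (hS : ∀ a ∈ S, IsHanoiAut a) {τ : Equiv.Perm (Word k)}
    (h : τ ∈ S ∨ τ⁻¹ ∈ S) : ∃ s, (s ∈ S) ∧ (τ ∈ S → s = τ) ∧ (τ ∉ S → s = τ⁻¹) ∧
      inactivePegs τ = inactivePegs s := by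
  by_cases hτ : τ ∈ S
  · exact ⟨τ, hτ, fun _ => rfl, fun hc => absurd hτ hc, rfl⟩
  · have hinv : τ⁻¹ ∈ S := h.resolve_left hτ
    exact ⟨τ⁻¹, hinv, fun hc => absurd hc hτ, fun _ => rfl,
      (inactivePegs_inv (letter_hanoi hS h)).symm⟩

lemma WU_one (U : Finset (Equiv.Perm (Word k))) : 1 ∈ WU U := ⟨[], by simp, by simp⟩

lemma WU_letters_hanoi (hS : ∀ a ∈ S, IsHanoiAut a) {U : Finset (Equiv.Perm (Word k))}
    (hUS : (U : Set (Equiv.Perm (Word k))) ⊆ S) {L : List (Equiv.Perm (Word k))}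
    (hL : ∀ τ ∈ L, τ ∈ (U : Set (Equiv.Perm (Word k))) ∨ τ⁻¹ ∈ (U : Set (Equiv.Perm (Word k)))) :
    ∀ τ ∈ L, IsHanoiAut τ := by
  intro τ hτ
  rcases hL τ hτ with h | h
  · exact letter_hanoi hS (Or.inl (hUS h))
  · exact letter_hanoi hS (Or.inr (hUS h))

lemma WU_tree (hS : ∀ a ∈ S, IsHanoiAut a) {U : Finset (Equiv.Perm (Word k))}
    (hUS : (U : Set (Equiv.Perm (Word k))) ⊆ S) {g : Equiv.Perm (Word k)} (hg : g ∈ WU U) :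
    IsTreeAut g := by
  obtain ⟨L, hL, rfl⟩ := hg
  exact isTreeAut_listProd fun τ hτ =>
    (inactivePegs_spec (WU_letters_hanoi hS hUS hL τ hτ)).1

lemma mem_E_pegs {U : Finset (Equiv.Perm (Word k))} {x : Fin k}
    (hx : x ∈ ⋂ s ∈ U, inactivePegs s) (hS : ∀ a ∈ S, IsHanoiAut a)
    (hUS : (U : Set (Equiv.Perm (Word k))) ⊆ S) {τ : Equiv.Perm (Word k)}
    (hτ : τ ∈ (U : Set (Equiv.Perm (Word k))) ∨ τ⁻¹ ∈ (U : Set (Equiv.Perm (Word k)))) :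
    x ∈ inactivePegs τ := by
  rcases hτ with h | h
  · exact Set.mem_iInter₂.mp hx τ h
  · rw [← inactivePegs_inv (letter_hanoi hS (Or.inr (hUS h)))]
    exact Set.mem_iInter₂.mp hx τ⁻¹ h

lemma WU_E_fix (hS : ∀ a ∈ S, IsHanoiAut a) {U : Finset (Equiv.Perm (Word k))}
    (hUS : (U : Set (Equiv.Perm (Word k))) ⊆ S) {g : Equiv.Perm (Word k)} (hg : g ∈ WU U)
    {x : Fin k} (hx : x ∈ ⋂ s ∈ U, inactivePegs s) :
    sec g x = g ∧ rootPerm g x = x := by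
  obtain ⟨L, hL, rfl⟩ := hg
  have hH := WU_letters_hanoi hS hUS hL
  have hpegs : ∀ τ ∈ L, x ∈ inactivePegs τ := fun τ hτ => mem_E_pegs hx hS hUS (hL τ hτ)
  constructor
  · rw [sec_prod hH, collect_all hH hpegs]
  · exact rootPerm_prod_fix hH
      (fun τ hτ => (inactivePegs_spec (hH τ hτ)).2.2.2 x (hpegs τ hτ))

lemma WU_ext {E : Set (Fin k)} {g g' : Equiv.Perm (Word k)} (hg : IsTreeAut g)
    (hg' : IsTreeAut g')
    (hEg : ∀ x ∈ E, sec g x = g ∧ rootPerm g x = x)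
    (hEg' : ∀ x ∈ E, sec g' x = g' ∧ rootPerm g' x = x)
    (hroot : rootPerm g = rootPerm g') (hsec : ∀ x ∉ E, sec g x = sec g' x) : g = g' := by
  refine Equiv.ext fun v => ?_
  induction v with
  | nil => rw [hg.nil, hg'.nil]
  | cons x w ih =>
    by_cases hx : x ∈ E
    · rw [tree_cons hg, tree_cons hg', (hEg x hx).1, (hEg x hx).2, (hEg' x hx).1,
        (hEg' x hx).2, ih]
    · rw [tree_cons hg, tree_cons hg', hroot, hsec x hx]

lemma rootPerm_fix_inv {τ : Equiv.Perm (Word k)} (ht : IsTreeAut τ) {x : Fin k}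
    (h : rootPerm τ⁻¹ x = x) : rootPerm τ x = x := by
  rw [rootPerm_inv ht] at h
  conv_lhs => rw [← h]
  rw [Equiv.Perm.apply_inv_self]

theorem WU_finite (hS : ∀ a ∈ S, IsHanoiAut a) (hCS : CondStar S)
    (U : Finset (Equiv.Perm (Word k))) :
    (U : Set (Equiv.Perm (Word k))) ⊆ S → (⋂ s ∈ U, inactivePegs s).Nonempty →
      (WU U).Finite := by
  classical
  induction U using Finset.strongInduction with
  | _ U ih =>
    intro hUS hE
    have hΦ : ∀ x : Fin k, ∃ F : Set (Equiv.Perm (Word k)), F.Finite ∧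
        ∀ g ∈ WU U, x ∉ (⋂ s ∈ U, inactivePegs s) → sec g x ∈ F := by
      intro x
      by_cases hx : x ∈ ⋂ s ∈ U, inactivePegs s
      · exact ⟨∅, Set.finite_empty, fun g _ hc => absurd hx hc⟩
      by_cases hfix : ∀ s ∈ U, rootPerm s x = x
      · -- x is fixed by all root permutations of `U`
        refine ⟨WU (U.filter (fun s => x ∈ inactivePegs s)), ?_, ?_⟩
        · refine ih _ ?_ ?_ ?_
          · obtain ⟨s₀, hs₀U, hs₀⟩ : ∃ s₀ ∈ U, x ∉ inactivePegs s₀ := by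
              by_contra hc
              push_neg at hc
              exact hx (Set.mem_iInter₂.mpr hc)
            refine (Finset.ssubset_iff_of_subset (Finset.filter_subset _ _)).mpr ?_
            exact ⟨s₀, hs₀U, by simp [hs₀]⟩
          · exact fun s hs => hUS (Finset.mem_coe.mpr
              (Finset.mem_of_mem_filter _ (Finset.mem_coe.mp hs)))
          · obtain ⟨q, hq⟩ := hE
            exact ⟨q, Set.mem_iInter₂.mpr fun s hs =>
              Set.mem_iInter₂.mp hq s (Finset.mem_of_mem_filter _ hs)⟩
        · rintro g ⟨L, hL, rfl⟩ _
          have hH := WU_letters_hanoi hS hUS hL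
          have hfix' : ∀ τ ∈ L, rootPerm τ x = x := by
            intro τ hτ
            rcases hL τ hτ with h | h
            · exact hfix τ h
            · exact rootPerm_fix_inv
                (inactivePegs_spec (letter_hanoi hS (Or.inr (hUS h)))).1 (hfix τ⁻¹ h)
          rw [sec_prod hH]
          refine ⟨collect L x, ?_, rfl⟩
          intro b hb
          have hbU := hL b ((collect_sublist L x).subset hb)
          have hxpegs : x ∈ inactivePegs b := collect_fix_mem hH hfix' b hb
          rcases hbU with h | h
          · exact Or.inl (Finset.mem_coe.mpr
              (Finset.mem_filter.mpr ⟨Finset.mem_coe.mp h, hxpegs⟩))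
          · refine Or.inr (Finset.mem_coe.mpr (Finset.mem_filter.mpr
              ⟨Finset.mem_coe.mp h, ?_⟩))
            rw [inactivePegs_inv (letter_hanoi hS (Or.inr (hUS h)))]
            exact hxpegs
      · -- x is moved by some root permutation: use condition (*)
        obtain ⟨s₀, hs₀U, hs₀⟩ := hCS U hUS hE x hfix
        refine ⟨WU (U.erase s₀), ?_, ?_⟩
        · refine ih _ (Finset.erase_ssubset hs₀U) ?_ ?_
          · exact fun s hs => hUS (Finset.mem_coe.mpr
              (Finset.mem_of_mem_erase (Finset.mem_coe.mp hs)))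
          · obtain ⟨q, hq⟩ := hE
            exact ⟨q, Set.mem_iInter₂.mpr fun s hs =>
              Set.mem_iInter₂.mp hq s (Finset.mem_of_mem_erase hs)⟩
        · rintro g ⟨L, hL, rfl⟩ _
          have hH := WU_letters_hanoi hS hUS hL
          rw [sec_prod hH]
          refine ⟨collect L x, ?_, rfl⟩
          intro b hb
          obtain ⟨p, hporb, hppegs⟩ :=
            collect_orbit_mem (fun a ha => hS a (hUS ha)) hL x b hb
          have hbU := hL b ((collect_sublist L x).subset hb)
          rcases hbU with h | h
          · refine Or.inl (Finset.mem_coe.mpr (Finset.mem_erase.mpr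
              ⟨?_, Finset.mem_coe.mp h⟩))
            rintro rfl
            have hmem : p ∈ orbT U x ∩ inactivePegs b := ⟨hporb, hppegs⟩
            rw [hs₀] at hmem
            exact hmem
          · refine Or.inr (Finset.mem_coe.mpr (Finset.mem_erase.mpr
              ⟨?_, Finset.mem_coe.mp h⟩))
            intro heq
            have hpb : p ∈ inactivePegs b⁻¹ := by
              rw [inactivePegs_inv (letter_hanoi hS (Or.inr (hUS h)))]
              exact hppegs
            rw [heq] at hpb
            have hmem : p ∈ orbT U x ∩ inactivePegs s₀ := ⟨hporb, hpb⟩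
            rw [hs₀] at hmem
            exact hmem
    choose F hFfin hFsec using hΦ
    have hfin : ((fun g => (rootPerm g,
        fun x => if x ∈ (⋂ s ∈ U, inactivePegs s) then 1 else sec g x)) '' WU U).Finite := by
      refine Set.Finite.subset (Set.Finite.prod (Set.finite_univ)
        (Set.Finite.pi (fun x => (hFfin x).insert 1))) ?_
      rintro _ ⟨g, hg, rfl⟩
      refine ⟨Set.mem_univ _, ?_⟩
      intro x _
      by_cases hx : x ∈ ⋂ s ∈ U, inactivePegs s
      · simp only [if_pos hx]
        exact Set.mem_insert _ _
      · simp only [if_neg hx]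
        exact Set.mem_insert_of_mem _ (hFsec x g hg hx)
    refine Set.Finite.of_finite_image hfin ?_
    intro g hg g' hg' hθ
    simp only [Prod.mk.injEq] at hθ
    refine WU_ext (WU_tree hS hUS hg) (WU_tree hS hUS hg')
      (fun x hx => WU_E_fix hS hUS hg hx) (fun x hx => WU_E_fix hS hUS hg' hx) hθ.1 ?_
    intro x hx
    have h2 := congrFun hθ.2 x
    rwa [if_neg hx, if_neg hx] at h2


/-! ### Sufficiency -/

lemma WU_sec (hS : ∀ a ∈ S, IsHanoiAut a) {U : Finset (Equiv.Perm (Word k))}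
    (hUS : (U : Set (Equiv.Perm (Word k))) ⊆ S) {g : Equiv.Perm (Word k)}
    (hg : g ∈ WU U) (x : Fin k) : sec g x ∈ WU U := by
  obtain ⟨L, hL, rfl⟩ := hg
  rw [sec_prod (WU_letters_hanoi hS hUS hL)]
  exact ⟨collect L x, fun τ hτ => hL τ ((collect_sublist L x).subset hτ), rfl⟩

lemma WU_secW (hS : ∀ a ∈ S, IsHanoiAut a) {U : Finset (Equiv.Perm (Word k))}
    (hUS : (U : Set (Equiv.Perm (Word k))) ⊆ S) {g : Equiv.Perm (Word k)}
    (hg : g ∈ WU U) (v : Word k) : secW g v ∈ WU U := by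
  induction v generalizing g with
  | nil => exact hg
  | cons x w ih => exact ih (WU_sec hS hUS hg x)

lemma WU_subset_closure {U : Finset (Equiv.Perm (Word k))}
    (hUS : (U : Set (Equiv.Perm (Word k))) ⊆ S) {g : Equiv.Perm (Word k)} (hg : g ∈ WU U) :
    g ∈ Subgroup.closure S := by
  obtain ⟨L, hL, rfl⟩ := hg
  refine Subgroup.list_prod_mem _ ?_
  intro τ hτ
  rcases hL τ hτ with h | h
  · exact Subgroup.subset_closure (hUS h)
  · have : τ⁻¹ ∈ Subgroup.closure S := Subgroup.subset_closure (hUS h)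
    simpa using Subgroup.inv_mem _ this

theorem sufficiency (hS : ∀ a ∈ S, IsHanoiAut a) (hCS : CondStar S) :
    IsContracting (Subgroup.closure S) := by
  classical
  have hSfin : S.Finite := hanoiAut_finite.subset hS
  set 𝒰 : Finset (Finset (Equiv.Perm (Word k))) :=
    hSfin.toFinset.powerset.filter (fun U => (⋂ s ∈ U, inactivePegs s).Nonempty) with h𝒰
  set N : Set (Equiv.Perm (Word k)) := ⋃ U ∈ 𝒰, WU U with hN
  have hUmem : ∀ U ∈ 𝒰, (U : Set (Equiv.Perm (Word k))) ⊆ S ∧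
      (⋂ s ∈ U, inactivePegs s).Nonempty := by
    intro U hU
    rw [h𝒰, Finset.mem_filter, Finset.mem_powerset] at hU
    refine ⟨fun s hs => ?_, hU.2⟩
    have := hU.1 (Finset.mem_coe.mp hs)
    rwa [Set.Finite.mem_toFinset] at this
  have hNfin : N.Finite := by
    rw [hN]
    refine Set.Finite.biUnion (Finset.finite_toSet 𝒰) ?_
    intro U hU
    obtain ⟨h1, h2⟩ := hUmem U (Finset.mem_coe.mp hU)
    exact WU_finite hS hCS U h1 h2
  have hNsub : N ⊆ (Subgroup.closure S : Set (Equiv.Perm (Word k))) := by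
    rw [hN]
    intro g hg
    rw [Set.mem_iUnion₂] at hg
    obtain ⟨U, hU, hgU⟩ := hg
    exact WU_subset_closure (hUmem U hU).1 hgU
  have hWUN : ∀ U ∈ 𝒰, WU U ⊆ N := by
    intro U hU g hg
    rw [hN, Set.mem_iUnion₂]
    exact ⟨U, hU, hg⟩
  -- main capture claim by strong induction on the length of a representation
  have capture : ∀ (n : ℕ) (L : List (Equiv.Perm (Word k))), L.length ≤ n →
      (∀ τ ∈ L, τ ∈ S ∨ τ⁻¹ ∈ S) →
      ∃ m : ℕ, ∀ v : Word k, m ≤ v.length → secW L.prod v ∈ N := by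
    intro n
    induction n with
    | zero =>
      intro L hlen hL
      have hL0 : L = [] := List.eq_nil_of_length_eq_zero (Nat.le_zero.mp hlen)
      subst hL0
      by_cases hne : Nonempty (Fin k)
      · have hUem : (∅ : Finset (Equiv.Perm (Word k))) ∈ 𝒰 := by
          rw [h𝒰, Finset.mem_filter, Finset.mem_powerset]
          refine ⟨Finset.empty_subset _, ?_⟩
          simp only [Finset.notMem_empty, Set.iInter_of_empty, Set.iInter_univ]
          exact ⟨hne.some, trivial⟩
        refine ⟨0, fun v _ => hWUN ∅ hUem ?_⟩
        have : ([] : List (Equiv.Perm (Word k))).prod ∈ WU (∅ : Finset (Equiv.Perm (Word k))) := by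
          simpa using WU_one (k := k) ∅
        exact WU_secW hS (by simp) this v
      · refine ⟨1, fun v hv => ?_⟩
        cases v with
        | nil => simp at hv
        | cons x w => exact (hne ⟨x⟩).elim
    | succ n ihn =>
      intro L hlen hL
      by_cases hEL : (⋂ τ ∈ L, inactivePegs τ).Nonempty
      · -- essential set of the representation is nonempty
        set U : Finset (Equiv.Perm (Word k)) :=
          L.toFinset.image (fun τ => if τ ∈ S then τ else τ⁻¹) with hU
        have hUS : (U : Set (Equiv.Perm (Word k))) ⊆ S := by
          intro s hs
          rw [hU] at hs
          simp only [Finset.coe_image, Set.mem_image, Finset.mem_coe, List.mem_toFinset] at hs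
          obtain ⟨τ, hτ, rfl⟩ := hs
          split_ifs with h
          · exact h
          · exact (hL τ hτ).resolve_left h
        have hUE : (⋂ s ∈ U, inactivePegs s).Nonempty := by
          obtain ⟨q, hq⟩ := hEL
          refine ⟨q, Set.mem_iInter₂.mpr ?_⟩
          intro s hs
          rw [hU, Finset.mem_image] at hs
          obtain ⟨τ, hτ, rfl⟩ := hs
          rw [List.mem_toFinset] at hτ
          have hqτ : q ∈ inactivePegs τ := Set.mem_iInter₂.mp hq τ hτ
          split_ifs with h
          · exact hqτ
          · rw [inactivePegs_inv (letter_hanoi hS (hL τ hτ))]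
            exact hqτ
        have hU𝒰 : U ∈ 𝒰 := by
          rw [h𝒰, Finset.mem_filter, Finset.mem_powerset]
          refine ⟨fun s hs => ?_, hUE⟩
          rw [Set.Finite.mem_toFinset]
          exact hUS (Finset.mem_coe.mpr hs)
        have hgWU : L.prod ∈ WU U := by
          refine ⟨L, ?_, rfl⟩
          intro τ hτ
          by_cases h : τ ∈ S
          · left
            rw [hU]
            simp only [Finset.coe_image, Set.mem_image, Finset.mem_coe, List.mem_toFinset]
            exact ⟨τ, hτ, by rw [if_pos h]⟩
          · right
            rw [hU]
            simp only [Finset.coe_image, Set.mem_image, Finset.mem_coe, List.mem_toFinset]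
            exact ⟨τ, hτ, by rw [if_neg h]⟩
        exact ⟨0, fun v _ => hWUN U hU𝒰 (WU_secW hS hUS hgWU v)⟩
      · -- essential set empty: all sections are strictly shorter
        have hHan : ∀ τ ∈ L, IsHanoiAut τ := fun τ hτ => letter_hanoi hS (hL τ hτ)
        have hstrict : ∀ x : Fin k, (collect L x).length < L.length := by
          intro x
          rcases Nat.lt_or_ge (collect L x).length L.length with h | h
          · exact h
          · exfalso
            have heq : (collect L x).length = L.length :=
              le_antisymm (collect_sublist L x).length_le h
            have := collect_full_of_length hHan heq
            exact hEL ⟨x, Set.mem_iInter₂.mpr this⟩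
        have hrec : ∀ x : Fin k, ∃ m : ℕ, ∀ v : Word k, m ≤ v.length →
            secW (collect L x).prod v ∈ N := by
          intro x
          refine ihn (collect L x) ?_ ?_
          · have := hstrict x; omega
          · exact fun τ hτ => hL τ ((collect_sublist L x).subset hτ)
        choose m hm using hrec
        refine ⟨(Finset.univ.sup m) + 1, ?_⟩
        intro v hv
        cases v with
        | nil => simp at hv
        | cons x w =>
          show secW (sec L.prod x) w ∈ N
          rw [sec_prod hHan]
          refine hm x w ?_
          have h1 : m x ≤ Finset.univ.sup m := Finset.le_sup (Finset.mem_univ x)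
          simp only [List.length_cons] at hv
          omega
  refine ⟨N, hNfin, hNsub, ?_⟩
  intro g hg
  obtain ⟨L, hL, rfl⟩ := exists_word hg
  exact capture L.length L le_rfl hL


/-! ### Necessity -/

section Necessity

variable {T : Finset (Equiv.Perm (Word k))}

/-- basic closure facts at a common inactive peg `q` -/
lemma closure_q_fix (hS : ∀ a ∈ S, IsHanoiAut a) (hT : (T : Set (Equiv.Perm (Word k))) ⊆ S)
    {q : Fin k} (hq : q ∈ ⋂ s ∈ T, inactivePegs s) {g : Equiv.Perm (Word k)}
    (hg : g ∈ Subgroup.closure (T : Set (Equiv.Perm (Word k)))) :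
    IsTreeAut g ∧ sec g q = g ∧ rootPerm g q = q := by
  refine Subgroup.closure_induction ?_ ?_ ?_ ?_ hg
  · intro s hs
    have hH := inactivePegs_spec (hS s (hT hs))
    have hqs : q ∈ inactivePegs s := Set.mem_iInter₂.mp hq s hs
    exact ⟨hH.1, hH.2.2.1 q hqs, hH.2.2.2 q hqs⟩
  · exact ⟨isTreeAut_one, sec_one q, by rw [rootPerm_one]; rfl⟩
  · rintro x y _ _ ⟨hx1, hx2, hx3⟩ ⟨hy1, hy2, hy3⟩
    refine ⟨hx1.mul hy1, ?_, ?_⟩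
    · rw [(sec_mul hx1 hy1 q).2, hy3, hx2, hy2]
    · rw [(sec_mul hx1 hy1 q).1, hy3, hx3]
  · rintro x _ ⟨hx1, hx2, hx3⟩
    have hroot : rootPerm x⁻¹ q = q := by
      rw [rootPerm_inv hx1]
      apply (rootPerm x).injective
      rw [Equiv.Perm.apply_inv_self, hx3]
    refine ⟨hx1.inv, ?_, hroot⟩
    rw [sec_inv hx1, hroot, hx2]

lemma secW_replicate {g : Equiv.Perm (Word k)} {q : Fin k} (hsec : sec g q = g) (m : ℕ) :
    secW g (List.replicate m q) = g := by
  induction m with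
  | zero => rfl
  | succ m ih =>
    rw [List.replicate_succ]
    show secW (sec g q) (List.replicate m q) = g
    rw [hsec, ih]

/-- clean movers: elements moving `p` at the root with trivial section at `p` -/
def Mover (T : Finset (Equiv.Perm (Word k))) (p p' : Fin k) : Prop :=
  ∃ ρ, ρ ∈ Subgroup.closure (T : Set (Equiv.Perm (Word k))) ∧
    rootPerm ρ p = p' ∧ sec ρ p = 1

lemma mover_refl (p : Fin k) : Mover T p p :=
  ⟨1, Subgroup.one_mem _, by rw [rootPerm_one]; rfl, sec_one p⟩

lemma mover_trans (hS : ∀ a ∈ S, IsHanoiAut a) (hT : (T : Set (Equiv.Perm (Word k))) ⊆ S)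
    {q : Fin k} (hq : q ∈ ⋂ s ∈ T, inactivePegs s)
    {p p' p'' : Fin k} (h1 : Mover T p p') (h2 : Mover T p' p'') : Mover T p p'' := by
  obtain ⟨ρ, hρ, hr, hs⟩ := h1
  obtain ⟨ρ', hρ', hr', hs'⟩ := h2
  have ht := (closure_q_fix hS hT hq hρ).1
  have ht' := (closure_q_fix hS hT hq hρ').1
  refine ⟨ρ' * ρ, Subgroup.mul_mem _ hρ' hρ, ?_, ?_⟩
  · rw [(sec_mul ht' ht p).1, hr, hr']
  · rw [(sec_mul ht' ht p).2, hr, hs, hs', one_mul]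

lemma mover_symm (hS : ∀ a ∈ S, IsHanoiAut a) (hT : (T : Set (Equiv.Perm (Word k))) ⊆ S)
    {q : Fin k} (hq : q ∈ ⋂ s ∈ T, inactivePegs s)
    {p p' : Fin k} (h : Mover T p p') : Mover T p' p := by
  obtain ⟨ρ, hρ, hr, hs⟩ := h
  have ht := (closure_q_fix hS hT hq hρ).1
  have hroot : rootPerm ρ⁻¹ p' = p := by
    rw [rootPerm_inv ht]
    apply (rootPerm ρ).injective
    rw [Equiv.Perm.apply_inv_self, hr]
  refine ⟨ρ⁻¹, Subgroup.inv_mem _ hρ, hroot, ?_⟩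
  rw [sec_inv ht, hroot, hs, inv_one]

lemma mover_letter (hS : ∀ a ∈ S, IsHanoiAut a) (hT : (T : Set (Equiv.Perm (Word k))) ⊆ S)
    {s : Equiv.Perm (Word k)} (hs : s ∈ T) (y : Fin k) :
    Mover T y (rootPerm s y) ∧ Mover T y (rootPerm s⁻¹ y) := by
  have hH := inactivePegs_spec (hS s (hT hs))
  have hHinv := hanoiWith_inv hH
  have hscl : s ∈ Subgroup.closure (T : Set (Equiv.Perm (Word k))) :=
    Subgroup.subset_closure hs
  constructor
  · by_cases hy : y ∈ inactivePegs s
    · rw [hH.2.2.2 y hy]; exact mover_refl y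
    · exact ⟨s, hscl, rfl, hH.2.1 y hy⟩
  · by_cases hy : y ∈ inactivePegs s
    · rw [hHinv.2.2.2 y hy]; exact mover_refl y
    · exact ⟨s⁻¹, Subgroup.inv_mem _ hscl, rfl, hHinv.2.1 y hy⟩

lemma orbit_mover (hS : ∀ a ∈ S, IsHanoiAut a) (hT : (T : Set (Equiv.Perm (Word k))) ⊆ S)
    {q : Fin k} (hq : q ∈ ⋂ s ∈ T, inactivePegs s) (j : Fin k) :
    ∀ p ∈ orbT T j, Mover T j p := by
  have key : ∀ σ ∈ Subgroup.closure
      ((fun a => rootPerm a) '' (T : Set (Equiv.Perm (Word k)))),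
      ∀ y, Mover T j y → Mover T j (σ y) ∧ Mover T j (σ⁻¹ y) := by
    intro σ hσ
    refine Subgroup.closure_induction ?_ ?_ ?_ ?_ hσ
    · rintro σ ⟨s, hsT, rfl⟩ y hy
      constructor
      · exact mover_trans hS hT hq hy (mover_letter hS hT hsT y).1
      · have h2 := (mover_letter hS hT hsT y).2
        rw [rootPerm_inv (inactivePegs_spec (hS s (hT hsT))).1] at h2
        exact mover_trans hS hT hq hy h2
    · intro y hy
      constructor <;> simpa using hy
    · intro σ τ _ _ ihσ ihτ y hy
      constructor
      · have h1 := (ihτ y hy).1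
        have h2 := (ihσ (τ y) h1).1
        simpa [Equiv.Perm.mul_apply] using h2
      · have h1 := (ihσ y hy).2
        have h2 := (ihτ (σ⁻¹ y) h1).2
        simpa [Equiv.Perm.mul_apply] using h2
    · intro σ _ ihσ y hy
      exact ⟨(ihσ y hy).2, by simpa using (ihσ y hy).1⟩
  rintro p ⟨⟨σ, hσ⟩, rfl⟩
  exact (key σ hσ j (mover_refl j)).1

lemma mover_orbit_pair (hS : ∀ a ∈ S, IsHanoiAut a) (hT : (T : Set (Equiv.Perm (Word k))) ⊆ S)
    {q : Fin k} (hq : q ∈ ⋂ s ∈ T, inactivePegs s) {j p p' : Fin k}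
    (hp : p ∈ orbT T j) (hp' : p' ∈ orbT T j) : Mover T p p' :=
  mover_trans hS hT hq (mover_symm hS hT hq (orbit_mover hS hT hq j p hp))
    (orbit_mover hS hT hq j p' hp')

end Necessity


section Necessity2

variable {T : Finset (Equiv.Perm (Word k))}

lemma sim_lemma (hS : ∀ a ∈ S, IsHanoiAut a) (hT : (T : Set (Equiv.Perm (Word k))) ⊆ S)
    {q : Fin k} (hq : q ∈ ⋂ s ∈ T, inactivePegs s) {j : Fin k}
    (hno : ∀ s ∈ T, (orbT T j ∩ inactivePegs s).Nonempty) :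
    ∀ (L : List (Equiv.Perm (Word k))),
      (∀ τ ∈ L, τ ∈ (T : Set (Equiv.Perm (Word k))) ∨ τ⁻¹ ∈ (T : Set (Equiv.Perm (Word k)))) →
      ∀ p ∈ orbT T j,
        ∃ h ∈ Subgroup.closure (T : Set (Equiv.Perm (Word k))),
          rootPerm h p = p ∧ sec h p = L.prod := by
  intro L
  induction L with
  | nil =>
    intro _ p _
    exact ⟨1, Subgroup.one_mem _, by rw [rootPerm_one]; rfl, by rw [List.prod_nil, sec_one]⟩
  | cons τ t ih =>
    intro hL p hp
    obtain ⟨h₂, hh₂cl, hh₂r, hh₂s⟩ := ih (fun a ha => hL a (by simp [ha])) p hp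
    -- positive form of the letter τ
    have hτH : IsHanoiAut τ := by
      rcases hL τ (by simp) with h | h
      · exact hS τ (hT h)
      · have := isHanoiAut_inv (hS _ (hT h)); rwa [inv_inv] at this
    have hτcl : τ ∈ Subgroup.closure (T : Set (Equiv.Perm (Word k))) := by
      rcases hL τ (by simp) with h | h
      · exact Subgroup.subset_closure h
      · have : τ⁻¹ ∈ Subgroup.closure (T : Set (Equiv.Perm (Word k))) :=
          Subgroup.subset_closure h
        simpa using Subgroup.inv_mem _ this
    have hd : ∃ d, d ∈ orbT T j ∧ d ∈ inactivePegs τ := by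
      rcases hL τ (by simp) with h | h
      · obtain ⟨d, hd1, hd2⟩ := hno τ h
        exact ⟨d, hd1, hd2⟩
      · obtain ⟨d, hd1, hd2⟩ := hno τ⁻¹ h
        refine ⟨d, hd1, ?_⟩
        rwa [inactivePegs_inv hτH] at hd2
    obtain ⟨d, hdo, hdp⟩ := hd
    obtain ⟨ρ₁, hρ₁cl, hρ₁r, hρ₁s⟩ := mover_orbit_pair hS hT hq hp hdo
    obtain ⟨ρ₂, hρ₂cl, hρ₂r, hρ₂s⟩ := mover_orbit_pair hS hT hq hdo hp
    have hτspec := inactivePegs_spec hτH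
    have htρ₁ := (closure_q_fix hS hT hq hρ₁cl).1
    have htρ₂ := (closure_q_fix hS hT hq hρ₂cl).1
    have hth₂ := (closure_q_fix hS hT hq hh₂cl).1
    have htτ := hτspec.1
    refine ⟨ρ₂ * (τ * (ρ₁ * h₂)),
      Subgroup.mul_mem _ hρ₂cl (Subgroup.mul_mem _ hτcl (Subgroup.mul_mem _ hρ₁cl hh₂cl)),
      ?_, ?_⟩
    · have hr1 : rootPerm (ρ₁ * h₂) p = d := by
        rw [(sec_mul htρ₁ hth₂ p).1, hh₂r, hρ₁r]
      have hr2 : rootPerm (τ * (ρ₁ * h₂)) p = d := by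
        rw [(sec_mul htτ (htρ₁.mul hth₂) p).1, hr1, hτspec.2.2.2 d hdp]
      rw [(sec_mul htρ₂ (htτ.mul (htρ₁.mul hth₂)) p).1, hr2, hρ₂r]
    · have hr1 : rootPerm (ρ₁ * h₂) p = d := by
        rw [(sec_mul htρ₁ hth₂ p).1, hh₂r, hρ₁r]
      have hr2 : rootPerm (τ * (ρ₁ * h₂)) p = d := by
        rw [(sec_mul htτ (htρ₁.mul hth₂) p).1, hr1, hτspec.2.2.2 d hdp]
      rw [(sec_mul htρ₂ (htτ.mul (htρ₁.mul hth₂)) p).2, hr2,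
        (sec_mul htτ (htρ₁.mul hth₂) p).2, hr1, (sec_mul htρ₁ hth₂ p).2, hh₂r,
        hρ₂s, hρ₁s, hh₂s, hτspec.2.2.1 d hdp, List.prod_cons]
      simp

lemma trans_lemma (hS : ∀ a ∈ S, IsHanoiAut a) (hT : (T : Set (Equiv.Perm (Word k))) ⊆ S)
    {q : Fin k} (hq : q ∈ ⋂ s ∈ T, inactivePegs s) {j : Fin k}
    (hno : ∀ s ∈ T, (orbT T j ∩ inactivePegs s).Nonempty) :
    ∀ (n : ℕ) (w u : Word k), w.length = n → u.length = n →
      (∀ x ∈ w, x ∈ orbT T j) → (∀ x ∈ u, x ∈ orbT T j) →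
      ∃ h ∈ Subgroup.closure (T : Set (Equiv.Perm (Word k))), h w = u := by
  intro n
  induction n with
  | zero =>
    intro w u hw hu _ _
    rw [List.length_eq_zero_iff] at hw hu
    subst hw; subst hu
    exact ⟨1, Subgroup.one_mem _, rfl⟩
  | succ n ihn =>
    intro w u hw hu hworb huorb
    cases w with
    | nil => simp at hw
    | cons x w' =>
      cases u with
      | nil => simp at hu
      | cons y u' =>
        simp only [List.length_cons, Nat.succ.injEq] at hw hu
        obtain ⟨h', hh'cl, hh'app⟩ := ihn w' u' hw hu
          (fun z hz => hworb z (by simp [hz])) (fun z hz => huorb z (by simp [hz]))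
        obtain ⟨L, hL, hLprod⟩ := exists_word hh'cl
        have hxorb : x ∈ orbT T j := hworb x (by simp)
        have hyorb : y ∈ orbT T j := huorb y (by simp)
        obtain ⟨h₁, hh₁cl, hh₁r, hh₁s⟩ := sim_lemma hS hT hq hno L hL x hxorb
        obtain ⟨ρ, hρcl, hρr, hρs⟩ := mover_orbit_pair hS hT hq hxorb hyorb
        have hth₁ := (closure_q_fix hS hT hq hh₁cl).1
        have htρ := (closure_q_fix hS hT hq hρcl).1
        refine ⟨ρ * h₁, Subgroup.mul_mem _ hρcl hh₁cl, ?_⟩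
        rw [Equiv.Perm.mul_apply, tree_cons hth₁, hh₁r, hh₁s, hLprod, hh'app,
          tree_cons htρ, hρr, hρs]
        rfl

theorem necessity (hS : ∀ a ∈ S, IsHanoiAut a)
    (hC : IsContracting (Subgroup.closure S)) : CondStar S := by
  intro T hT hEss j hj
  by_contra hno'
  push_neg at hno'
  have hno : ∀ s ∈ T, (orbT T j ∩ inactivePegs s).Nonempty := hno'
  obtain ⟨q, hq⟩ := hEss
  obtain ⟨N, hNfin, hNsub, hNcap⟩ := hC
  have hTN : ∀ h ∈ Subgroup.closure (T : Set (Equiv.Perm (Word k))), h ∈ N := by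
    intro h hh
    have hhS : h ∈ Subgroup.closure S := Subgroup.closure_mono hT hh
    obtain ⟨m, hm⟩ := hNcap h hhS
    have hmem := hm (List.replicate m q) (by simp)
    rwa [secW_replicate (closure_q_fix hS hT hq hh).2.1 m] at hmem
  simp only [fixT, Set.mem_setOf_eq, not_forall] at hj
  obtain ⟨s, hsT, hsj⟩ := hj
  have hjo : j ∈ orbT T j := MulAction.mem_orbit_self j
  have hj'o : rootPerm s j ∈ orbT T j := by
    refine ⟨⟨rootPerm s, Subgroup.subset_closure ⟨s, hsT, rfl⟩⟩, rfl⟩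
  set n : ℕ := Nat.card ↥N + 1 with hn
  have hex : ∀ f : Fin n → Bool,
      ∃ h ∈ Subgroup.closure (T : Set (Equiv.Perm (Word k))),
        h (List.replicate n j) = List.ofFn (fun i => if f i then j else rootPerm s j) := by
    intro f
    refine trans_lemma hS hT hq hno n _ _ (by simp) (by simp [hn]) ?_ ?_
    · intro z hz
      rw [List.eq_of_mem_replicate hz]
      exact hjo
    · intro z hz
      rw [List.mem_ofFn] at hz
      obtain ⟨i, hi⟩ := hz
      rw [← hi]
      show (if f i then j else rootPerm s j) ∈ orbT T j
      split_ifs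
      · exact hjo
      · exact hj'o
  choose hfun hmemcl happ using hex
  have hNsub' : Finite ↥N := hNfin.to_subtype
  have hinj : Function.Injective
      (fun f : Fin n → Bool => (⟨hfun f, hTN _ (hmemcl f)⟩ : ↥N)) := by
    intro f f' heq
    simp only [Subtype.mk.injEq] at heq
    have hww : List.ofFn (fun i => if f i then j else rootPerm s j) =
        List.ofFn (fun i => if f' i then j else rootPerm s j) := by
      rw [← happ f, ← happ f', heq]
    have hfn := List.ofFn_inj.mp hww
    funext i
    have := congrFun hfn i
    by_cases h1 : f i <;> by_cases h2 : f' i <;>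
      simp only [h1, h2, if_true, if_false] at this ⊢
    · exact absurd this.symm hsj
    · exact absurd this hsj
  have hcard := Nat.card_le_card_of_injective _ hinj
  have h2n : Nat.card (Fin n → Bool) = 2 ^ n := by
    simp [Nat.card_eq_fintype_card]
  rw [h2n] at hcard
  have hcard' : (2 : ℕ) ^ n ≤ Nat.card ↥N := hcard
  have hlt : Nat.card ↥N < 2 ^ n := by
    calc Nat.card ↥N < 2 ^ (Nat.card ↥N) := Nat.lt_two_pow_self
      _ ≤ 2 ^ n := Nat.pow_le_pow_right (by norm_num) (by omega)
  omega

end Necessity2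


/-- Theorem: contraction is equivalent to condition (*).
A `k`-peg Hanoi group generated by `S` is contracting if and only if `S`
satisfies condition (*). -/
theorem contracting_iff_condStar {k : ℕ} (S : Set (Equiv.Perm (Word k)))
    (hS1 : (1 : Equiv.Perm (Word k)) ∈ S) (hS : ∀ a ∈ S, IsHanoiAut a) :
    IsContracting (Subgroup.closure S) ↔ CondStar S :=
  ⟨necessity hS, sufficiency hS⟩

end Hanoi
end

section
/- For all distinct i, j ∈ {0,…,k−1}: F_i(F(E)) ∩ F_j(F(E)) = {q_l : l ∈ {0,…,k−1}, l ≠ i, l ≠ j}. -/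
/-!
Setting for the limit-space sections of Makisumi–Stadnyk–Steinhurst:
`p_0, …, p_{k-1}` are the vertices of a regular simplex in `ℝ^{k-1}`,
`q_i` is the centroid of `{p_j : j ≠ i}`, and `F_i` is the unique affine map
with `F_i (p_i) = p_i` and `F_i (p_j) = q_j` for `j ≠ i`.
-/

namespace HanoiGeo

set_option maxHeartbeats 2000000 in
/-- Lemma: intersections of first-level cells.
For distinct `i, j`:
`F_i(F(E)) ∩ F_j(F(E)) = { q_l : l ≠ i, l ≠ j }`, where `E` is the simplex
with vertices `p_0, …, p_{k-1}` and `F(A) = ⋃_l F_l(A)`. -/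
theorem cell_intersection {k : ℕ} (hk : 3 ≤ k)
    (p : Fin k → EuclideanSpace ℝ (Fin (k - 1)))
    (hind : AffineIndependent ℝ p)
    (d : ℝ) (hd : 0 < d) (hdist : ∀ i j, i ≠ j → dist (p i) (p j) = d)
    (q : Fin k → EuclideanSpace ℝ (Fin (k - 1)))
    (hq : ∀ i, q i = Finset.centroid ℝ (Finset.univ.erase i) p)
    (F : Fin k → (EuclideanSpace ℝ (Fin (k - 1)) →ᵃ[ℝ] EuclideanSpace ℝ (Fin (k - 1))))
    (hF : ∀ i, F i (p i) = p i ∧ ∀ j, j ≠ i → F i (p j) = q j)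
    (E : Set (EuclideanSpace ℝ (Fin (k - 1))))
    (hE : E = convexHull ℝ (Set.range p))
    (i j : Fin k) (hij : i ≠ j) :
    (F i '' (⋃ l, F l '' E)) ∩ (F j '' (⋃ l, F l '' E)) =
      {x | ∃ l : Fin k, l ≠ i ∧ l ≠ j ∧ x = q l} := by
  classical
  have hcard : Fintype.card (Fin k) =
      Module.finrank ℝ (EuclideanSpace ℝ (Fin (k - 1))) + 1 := by
    simp [finrank_euclideanSpace_fin]
    omega
  set bb : AffineBasis (Fin k) ℝ (EuclideanSpace ℝ (Fin (k - 1))) :=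
    ⟨p, hind, hind.affineSpan_eq_top_iff_card_eq_finrank_add_one.mpr hcard⟩ with hbb
  have hcoe : ⇑bb = p := rfl
  have hcp : ∀ l m : Fin k, bb.coord l (p m) = if l = m then 1 else 0 := by
    intro l m; rw [← hcoe]; exact bb.coord_apply l m
  have hK : (2:ℝ) ≤ (k:ℝ) - 1 := by
    have : (3:ℝ) ≤ (k:ℝ) := by exact_mod_cast hk
    linarith
  have hK0 : ((k:ℝ) - 1) ≠ 0 := by linarith
  have hcardE : ∀ m : Fin k, ((Finset.univ.erase m).card : ℝ) = (k:ℝ) - 1 := by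
    intro m
    rw [Finset.card_erase_of_mem (Finset.mem_univ m)]
    simp only [Finset.card_univ, Fintype.card_fin]
    have h1 : 1 ≤ k := by omega
    push_cast [Nat.cast_sub h1]
    ring
  have hcq : ∀ l m : Fin k, bb.coord l (q m) = if l = m then 0 else ((k:ℝ) - 1)⁻¹ := by
    intro l m
    have hne : (Finset.univ.erase m).Nonempty := by
      apply Finset.card_pos.mp
      rw [Finset.card_erase_of_mem (Finset.mem_univ m)]
      simp only [Finset.card_univ, Fintype.card_fin]
      omega
    have hw1 : ∑ x ∈ Finset.univ.erase m, Finset.centroidWeights ℝ (Finset.univ.erase m) x = 1 :=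
      Finset.sum_centroidWeights_eq_one_of_nonempty ℝ _ hne
    rw [hq m, Finset.centroid_def,
      Finset.map_affineCombination _ p _ hw1 (bb.coord l),
      Finset.affineCombination_eq_linear_combination _ _ _ hw1]
    simp only [Function.comp_apply, Finset.centroidWeights_apply, hcp, smul_eq_mul, mul_ite,
      mul_one, mul_zero]
    rw [Finset.sum_ite_eq (Finset.univ.erase m) l _]
    by_cases hlm : l = m
    · simp [hlm]
    · simp [Finset.mem_erase, hlm, hcardE m]
      rw [Nat.cast_sub (by omega : 1 ≤ k)]
      simp
  have hsum1 : ∀ y, ∑ m, bb.coord m y = 1 := bb.sum_coord_apply_eq_one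
  have hFc : ∀ (a : Fin k) (y : EuclideanSpace ℝ (Fin (k - 1))) (l : Fin k),
      bb.coord l (F a y) =
      (if l = a then bb.coord a y else 0)
      + (1 - bb.coord a y - (if l = a then 0 else bb.coord l y)) / ((k:ℝ) - 1) := by
    intro a y l
    conv_lhs => rw [← bb.affineCombination_coord_eq_self y,
      Finset.map_affineCombination _ _ _ (hsum1 y) (F a),
      Finset.map_affineCombination _ _ _ (hsum1 y) (bb.coord l),
      Finset.affineCombination_eq_linear_combination _ _ _ (hsum1 y)]
    have him : ∀ m : Fin k, bb.coord l (F a (bb m)) =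
        if m = a then (if l = a then 1 else 0) else (if l = m then 0 else ((k:ℝ) - 1)⁻¹) := by
      intro m
      by_cases hma : m = a
      · subst hma
        rw [hcoe, (hF m).1, hcp]
        simp
      · rw [hcoe, (hF a).2 m hma, hcq, if_neg hma]
    simp only [Function.comp_apply, smul_eq_mul, him]
    rw [Finset.sum_eq_sum_sdiff_singleton_add (Finset.mem_univ a)]
    have hsumdiff : ∑ m ∈ Finset.univ \ {a}, bb.coord m y = 1 - bb.coord a y := by
      have := hsum1 y
      rw [Finset.sum_eq_sum_sdiff_singleton_add (Finset.mem_univ a) (fun m => bb.coord m y)] at this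
      linarith
    by_cases hla : l = a
    · subst hla
      simp only [eq_self_iff_true, if_true]
      have : ∀ m ∈ Finset.univ \ {l}, bb.coord m y * (if m = l then (1:ℝ) else (if l = m then 0 else ((k:ℝ) - 1)⁻¹)) = bb.coord m y * ((k:ℝ) - 1)⁻¹ := by
        intro m hm
        rw [Finset.mem_sdiff, Finset.mem_singleton] at hm
        rw [if_neg hm.2, if_neg (fun h => hm.2 h.symm)]
      rw [Finset.sum_congr rfl this, ← Finset.sum_mul, hsumdiff]
      field_simp
      ring
    · rw [if_neg hla, if_neg hla]
      have h2 : ∀ m ∈ Finset.univ \ {a}, bb.coord m y * (if m = a then (0:ℝ) else (if l = m then 0 else ((k:ℝ) - 1)⁻¹)) = bb.coord m y * ((k:ℝ) - 1)⁻¹ - (if l = m then bb.coord m y * ((k:ℝ) - 1)⁻¹ else 0) := by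
        intro m hm
        rw [Finset.mem_sdiff, Finset.mem_singleton] at hm
        rw [if_neg hm.2]
        by_cases hlm : l = m
        · rw [if_pos hlm, if_pos hlm]; ring
        · rw [if_neg hlm, if_neg hlm]; ring
      rw [Finset.sum_congr rfl h2, Finset.sum_sub_distrib, ← Finset.sum_mul, hsumdiff,
        Finset.sum_ite_eq (Finset.univ \ {a}) l]
      have hlmem : l ∈ Finset.univ \ {a} := by
        rw [Finset.mem_sdiff, Finset.mem_singleton]; exact ⟨Finset.mem_univ l, hla⟩
      rw [if_pos hlmem]
      simp only [eq_self_iff_true, if_true, if_neg hla]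
      field_simp
      ring
  -- characterization of E
  have hEset : E = {x | ∀ l, 0 ≤ bb.coord l x} := by
    rw [hE, ← hcoe, bb.convexHull_eq_nonneg_coord]
  have hpos : ∀ y ∈ E, ∀ l, 0 ≤ bb.coord l y := by
    intro y hy
    rwa [hEset] at hy
  have hcle : ∀ y ∈ E, ∀ s : Finset (Fin k), ∑ m ∈ s, bb.coord m y ≤ 1 := by
    intro y hy s
    rw [← hsum1 y]
    exact Finset.sum_le_sum_of_subset_of_nonneg (Finset.subset_univ s)
      (fun m _ _ => hpos y hy m)
  have hone : ∀ y ∈ E, ∀ a, bb.coord a y ≤ 1 := by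
    intro y hy a
    have := hcle y hy {a}
    simpa using this
  have hpair : ∀ y ∈ E, ∀ a b : Fin k, a ≠ b →
      bb.coord a y + bb.coord b y ≤ 1 := by
    intro y hy a b hab
    have := hcle y hy {a, b}
    rwa [Finset.sum_pair hab] at this
  have htriple : ∀ y ∈ E, ∀ a b c : Fin k, a ≠ b → a ≠ c → b ≠ c →
      bb.coord a y + bb.coord b y + bb.coord c y ≤ 1 := by
    intro y hy a b c hab hac hbc
    have h := hcle y hy {a, b, c}
    rw [Finset.sum_insert (by simp [hab, hac]), Finset.sum_pair hbc] at h
    linarith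
  have hpE : ∀ m, p m ∈ E := by
    intro m
    rw [hEset]
    intro l
    rw [hcp]
    split <;> norm_num
  have hFE : ∀ a : Fin k, ∀ u ∈ E, F a u ∈ E := by
    intro a u hu
    rw [hEset]
    intro l
    rw [hFc a u l]
    by_cases hla : l = a
    · rw [if_pos hla, if_pos hla]
      have h1 := hpos u hu a
      have h2 := hone u hu a
      have : (0:ℝ) ≤ (1 - bb.coord a u - 0) / ((k:ℝ) - 1) := by
        apply div_nonneg <;> linarith
      linarith
    · rw [if_neg hla, if_neg hla]
      have h1 := hpair u hu a l (fun h => hla h.symm)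
      have : (0:ℝ) ≤ (1 - bb.coord a u - bb.coord l u) / ((k:ℝ) - 1) := by
        apply div_nonneg <;> linarith
      linarith
  have hk3 : (3:ℝ) ≤ (k:ℝ) := by exact_mod_cast hk
  have hdivK : ∀ x y' : ℝ, x / ((k:ℝ) - 1) = y' / ((k:ℝ) - 1) → x = y' := by
    intro x y' h
    rw [div_eq_div_iff hK0 hK0] at h
    exact mul_right_cancel₀ hK0 h
  -- key lemma: if `F a y = F b z` with `a ≠ b`, `y z ∈ E`, then coords vanish
  have key : ∀ a b : Fin k, a ≠ b →
      ∀ y z : EuclideanSpace ℝ (Fin (k - 1)), y ∈ E → z ∈ E → F a y = F b z →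
      bb.coord a y = 0 ∧ bb.coord a z = 0 ∧ bb.coord b z = 0 := by
    intro a b hab y z hyE hzE heq
    have e1 : bb.coord a (F a y) = bb.coord a (F b z) := by rw [heq]
    rw [hFc a y a, hFc b z a, if_pos rfl, if_pos rfl, if_neg hab, if_neg hab] at e1
    have hy0 := hpos y hyE a
    have hza := hpos z hzE a
    have hzb := hpos z hzE b
    have e1' : (bb.coord a y * ((k:ℝ) - 1) + (1 - bb.coord a y - 0)) / ((k:ℝ) - 1)
        = (0 * ((k:ℝ) - 1) + (1 - bb.coord b z - bb.coord a z)) / ((k:ℝ) - 1) := by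
      rw [add_div, add_div, mul_div_cancel_right₀ _ hK0, mul_div_cancel_right₀ _ hK0]
      exact e1
    have e1'' := hdivK _ _ e1'
    have hp2 : (0:ℝ) ≤ ((k:ℝ) - 2) * bb.coord a y := mul_nonneg (by linarith) hy0
    have hp3 : (0:ℝ) ≤ ((k:ℝ) - 3) * bb.coord a y := mul_nonneg (by linarith) hy0
    refine ⟨by nlinarith [e1'', hp2, hp3], by nlinarith [e1'', hp2, hp3],
      by nlinarith [e1'', hp2, hp3]⟩
  ext x
  constructor
  · rintro ⟨⟨y, hy, rfl⟩, z, hz, hzx⟩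
    simp only [Set.mem_iUnion] at hy hz
    obtain ⟨l₁, u, huE, rfl⟩ := hy
    obtain ⟨l₂, v, hvE, rfl⟩ := hz
    set y := F l₁ u with hy_def
    set z := F l₂ v with hz_def
    have hyE : y ∈ E := hFE l₁ u huE
    have hzE : z ∈ E := hFE l₂ v hvE
    obtain ⟨hwi, -, hzj⟩ := key i j hij y z hyE hzE hzx.symm
    -- now show coord j y = 0
    have e2 : bb.coord j (F i y) = bb.coord j (F j z) := by rw [hzx]
    rw [hFc i y j, hFc j z j, if_neg (Ne.symm hij), if_neg (Ne.symm hij),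
      if_pos rfl, if_pos rfl] at e2
    have hwj : bb.coord j y = 0 := by
      rw [hwi, hzj] at e2
      rw [zero_add, zero_add] at e2
      have := hdivK _ _ e2
      linarith
    -- case analysis on l₁
    have hl₁i : l₁ ≠ i := by
      intro h
      subst h
      rw [hy_def, hFc l₁ u l₁, if_pos rfl, if_pos rfl] at hwi
      have h1 := hpos u huE l₁
      have hp2 : (0:ℝ) ≤ ((k:ℝ) - 2) * bb.coord l₁ u := mul_nonneg (by linarith) h1
      have h' : (bb.coord l₁ u * ((k:ℝ) - 1) + (1 - bb.coord l₁ u - 0)) / ((k:ℝ) - 1)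
          = 0 / ((k:ℝ) - 1) := by
        rw [add_div, mul_div_cancel_right₀ _ hK0, zero_div]
        exact hwi
      have h'' := hdivK _ _ h'
      nlinarith [h'', hp2]
    have hl₁j : l₁ ≠ j := by
      intro h
      subst h
      rw [hy_def, hFc l₁ u l₁, if_pos rfl, if_pos rfl] at hwj
      have h1 := hpos u huE l₁
      have hp2 : (0:ℝ) ≤ ((k:ℝ) - 2) * bb.coord l₁ u := mul_nonneg (by linarith) h1
      have h' : (bb.coord l₁ u * ((k:ℝ) - 1) + (1 - bb.coord l₁ u - 0)) / ((k:ℝ) - 1)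
          = 0 / ((k:ℝ) - 1) := by
        rw [add_div, mul_div_cancel_right₀ _ hK0, zero_div]
        exact hwj
      have h'' := hdivK _ _ h'
      nlinarith [h'', hp2]
    -- coords of u
    have hei : bb.coord l₁ u + bb.coord i u = 1 := by
      rw [hy_def, hFc l₁ u i, if_neg (Ne.symm hl₁i), if_neg (Ne.symm hl₁i), zero_add] at hwi
      have h' : (1 - bb.coord l₁ u - bb.coord i u) / ((k:ℝ) - 1) = 0 / ((k:ℝ) - 1) := by
        rw [zero_div]; exact hwi
      have h'' := hdivK _ _ h'
      linarith
    have hej : bb.coord l₁ u + bb.coord j u = 1 := by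
      rw [hy_def, hFc l₁ u j, if_neg (Ne.symm hl₁j), if_neg (Ne.symm hl₁j), zero_add] at hwj
      have h' : (1 - bb.coord l₁ u - bb.coord j u) / ((k:ℝ) - 1) = 0 / ((k:ℝ) - 1) := by
        rw [zero_div]; exact hwj
      have h'' := hdivK _ _ h'
      linarith
    have htri := htriple u huE l₁ i j hl₁i hl₁j hij
    have hui : bb.coord i u = 0 := by
      have := hpos u huE i
      have := hpos u huE j
      linarith
    have hul₁ : bb.coord l₁ u = 1 := by linarith
    -- y = p l₁
    have hyp : y = p l₁ := by
      apply bb.ext_elem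
      intro m
      rw [← hcoe] at hcp ⊢
      rw [hcp]
      by_cases hml : m = l₁
      · subst hml
        rw [if_pos rfl, hy_def, hFc m u m, if_pos rfl, if_pos rfl, hul₁]
        norm_num
      · rw [if_neg hml]
        have h1 : bb.coord m y = (1 - bb.coord l₁ u - bb.coord m u) / ((k:ℝ) - 1) := by
          rw [hy_def, hFc l₁ u m, if_neg hml, if_neg hml]
          ring
        have h2 : bb.coord m y = - bb.coord m u / ((k:ℝ) - 1) := by
          rw [h1, hul₁]; ring_nf
        have h3 := hpos y hyE m
        have h4 := hpos u huE m
        rw [h2] at h3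
        have h6 : (0:ℝ) ≤ -bb.coord m u := by
          have h7 := mul_nonneg h3 (le_of_lt (by linarith : (0:ℝ) < (k:ℝ) - 1))
          rwa [div_mul_cancel₀ _ hK0] at h7
        have h5 : bb.coord m u = 0 := le_antisymm (by linarith) h4
        rw [h2, h5]
        simp
    refine ⟨l₁, hl₁i, hl₁j, ?_⟩
    show F i y = q l₁
    rw [hyp, (hF i).2 l₁ hl₁i]
  · rintro ⟨l, hli, hlj, rfl⟩
    constructor
    · refine ⟨p l, ?_, (hF i).2 l hli⟩
      exact Set.mem_iUnion.mpr ⟨l, ⟨p l, hpE l, (hF l).1⟩⟩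
    · refine ⟨p l, ?_, (hF j).2 l hlj⟩
      exact Set.mem_iUnion.mpr ⟨l, ⟨p l, hpE l, (hF l).1⟩⟩

end HanoiGeo
end
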